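/- If (X,r) is a bijective left non-degenerate solution of the Yang–Baxter equation, written r^{-1}(x,y) = (λ̂_x(y), ρ̂_y(x)), then for all x,z ∈ X one has σ_z(x) := λ_z(ρ_{λ_x^{-1}(z)}(x)) = λ_z(λ̂_z^{-1}(x)); in particular each σ_z is a bijection of X. -/
import Mathlib


/-- The map `σ_z` of a left non-degenerate solution:
`σ_z(x) = λ_z(ρ_{λ_x⁻¹(z)}(x))`. -/
def sigmaMap {X : Type*} (lam : X → Equiv.Perm X) (rho : X → X → X) (z x : X) : X :=
  lam z (rho ((lam x).symm z) x)

theorem stmt2 {X : Type*} (lam : X → Equiv.Perm X) (rho : X → X → X)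
    (lamhat rhohat : X → X → X)
    (hYB1 : ∀ x y z : X, lam x (lam y z) = lam (lam x y) (lam (rho y x) z))
    (hYB2 : ∀ x y z : X,
      lam (rho (lam y z) x) (rho z y) = rho (lam (rho y x) z) (lam x y))
    (hYB3 : ∀ x y z : X, rho z (rho y x) = rho (rho z y) (rho (lam y z) x))
    -- `(x,y) ↦ (λ̂_x(y), ρ̂_y(x))` is a two-sided inverse of `r`, so `r` is bijective
    (hinv₁ : ∀ p : X × X,
      (fun q : X × X => (lam q.1 q.2, rho q.2 q.1))
        ((fun q : X × X => (lamhat q.1 q.2, rhohat q.2 q.1)) p) = p)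
    (hinv₂ : ∀ p : X × X,
      (fun q : X × X => (lamhat q.1 q.2, rhohat q.2 q.1))
        ((fun q : X × X => (lam q.1 q.2, rho q.2 q.1)) p) = p) :
    (∀ z : X, Function.Bijective (lamhat z)) ∧
    -- i.e. `σ_z(x) = λ_z(λ̂_z⁻¹(x))`, expressed as `λ̂_z(λ_z⁻¹(σ_z(x))) = x`
    (∀ x z : X, lamhat z ((lam z).symm (sigmaMap lam rho z x)) = x) ∧
    (∀ z : X, Function.Bijective (sigmaMap lam rho z)) := by
  -- unpack the inverse conditions
  have h1a : ∀ x y : X, lam (lamhat x y) (rhohat y x) = x := fun x y =>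
    congrArg Prod.fst (hinv₁ (x, y))
  have h1b : ∀ x y : X, rho (rhohat y x) (lamhat x y) = y := fun x y =>
    congrArg Prod.snd (hinv₁ (x, y))
  have h2a : ∀ x y : X, lamhat (lam x y) (rho y x) = x := fun x y =>
    congrArg Prod.fst (hinv₂ (x, y))
  -- key identity: lamhat z (rho ((lam x).symm z) x) = x
  have key : ∀ x z : X, lamhat z (rho ((lam x).symm z) x) = x := by
    intro x z
    have := h2a x ((lam x).symm z)
    rwa [Equiv.apply_symm_apply] at this
  have hbij : ∀ z : X, Function.Bijective (lamhat z) := by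
    intro z
    constructor
    · intro a b hab
      have ha := h1a z a
      have hb := h1a z b
      rw [hab] at ha
      have hr : rhohat a z = rhohat b z := (lam (lamhat z b)).injective (ha.trans hb.symm)
      have ha' := h1b z a
      have hb' := h1b z b
      rw [hab, hr] at ha'
      exact ha'.symm.trans hb'
    · intro x
      exact ⟨rho ((lam x).symm z) x, key x z⟩
  have hsig : ∀ x z : X, lamhat z ((lam z).symm (sigmaMap lam rho z x)) = x := by
    intro x z
    simp only [sigmaMap, Equiv.symm_apply_apply]
    exact key x z
  refine ⟨hbij, hsig, fun z => ⟨?_, ?_⟩⟩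
  · intro a b hab
    have := hsig a z
    rw [hab, hsig b z] at this
    exact this.symm
  · intro y
    refine ⟨lamhat z ((lam z).symm y), ?_⟩
    set x := lamhat z ((lam z).symm y) with hx
    have h1 : lamhat z (rho ((lam x).symm z) x) = x := key x z
    have h2 : rho ((lam x).symm z) x = (lam z).symm y :=
      (hbij z).1 (h1.trans hx)
    simp [sigmaMap, h2]
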